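/- The left Cramer identity holds for Manin matrices: if M is an n×n Manin matrix and M^adj is its adjugate whose (i,j) entry is (−1)^{i+j} times the column determinant of the (j,i) minor of M, then M^adj · M = det^col(M) · Id. -/

import Mathlib

/-- The column determinant of a square matrix over a noncommutative ring:
`det^col M = ∑_σ sgn σ · M_{σ(1),1} M_{σ(2),2} ⋯ M_{σ(n),n}` (product left to right). -/
def detCol {R : Type*} [Ring R] {n : ℕ} (M : Matrix (Fin n) (Fin n) R) : R :=
  ∑ σ : Equiv.Perm (Fin n),
    (Equiv.Perm.sign σ : ℤ) • (List.ofFn fun t => M (σ t) t).prod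

/-- The adjugate of a square matrix over a noncommutative ring, formed from column
determinants of the `(n-1) × (n-1)` minors exactly as in the commutative case: its `(i,j)`
entry is `(-1)^{i+j}` times the column determinant of the minor obtained by deleting
row `j` and column `i`. -/
def adjCol {R : Type*} [Ring R] {n : ℕ} (M : Matrix (Fin (n + 1)) (Fin (n + 1)) R) :
    Matrix (Fin (n + 1)) (Fin (n + 1)) R :=
  fun i j => ((-1 : ℤ) ^ ((i : ℕ) + (j : ℕ))) • detCol (M.submatrix j.succAbove i.succAbove)

namespace ManinCramer

variable {R : Type*} [Ring R]

/-- Generalized column-reordered determinant-like sum. -/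
def S {n : ℕ} (M : Matrix (Fin n) (Fin n) R) (f : Fin n → Fin n) : R :=
  ∑ σ : Equiv.Perm (Fin n),
    (Equiv.Perm.sign σ : ℤ) • (List.ofFn fun t => M (σ t) (f t)).prod

theorem detCol_eq_S {n : ℕ} (M : Matrix (Fin n) (Fin n) R) : detCol M = S M id := rfl


theorem ofFn_update_prod {m : ℕ} (i : Fin m) (g : Fin (m + 1) → R) :
    ∃ A B : R, ∀ x y : R,
      (List.ofFn (Function.update (Function.update g i.castSucc x) i.succ y)).prod
        = A * x * y * B := by
  induction m with
  | zero => exact i.elim0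
  | succ m ih =>
    induction i using Fin.cases with
    | zero =>
      refine ⟨1, (List.ofFn fun t : Fin m => g t.succ.succ).prod, fun x y => ?_⟩
      set u := Function.update (Function.update g (Fin.castSucc 0) x) (Fin.succ 0) y with hu
      have e0 : u 0 = x := by
        rw [hu, Function.update_of_ne (Ne.symm (Fin.succ_ne_zero _))]
        rw [Fin.castSucc_zero, Function.update_self]
      have e1 : u ((0 : Fin (m + 1)).succ) = y := Function.update_self _ _ _
      have e2 : ∀ t : Fin m, u t.succ.succ = g t.succ.succ := by
        intro t
        rw [hu, Function.update_of_ne (by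
          intro h
          exact Fin.succ_ne_zero t (Fin.succ_injective _ h))]
        rw [Function.update_of_ne (by
          rw [Fin.castSucc_zero]; exact Fin.succ_ne_zero _)]
      rw [List.ofFn_succ, List.ofFn_succ, List.prod_cons, List.prod_cons, e0, e1]
      have : (fun t : Fin m => u t.succ.succ) = fun t : Fin m => g t.succ.succ :=
        funext e2
      rw [this, one_mul, mul_assoc]
    | succ j =>
      obtain ⟨A, B, hAB⟩ := ih j (fun t => g t.succ)
      refine ⟨g 0 * A, B, fun x y => ?_⟩
      set u := Function.update (Function.update g (Fin.castSucc j.succ) x) (Fin.succ j.succ) y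
        with hu
      have e0 : u 0 = g 0 := by
        rw [hu, Function.update_of_ne (Ne.symm (Fin.succ_ne_zero _)),
          Function.update_of_ne (by
            rw [← Fin.succ_castSucc]; exact Ne.symm (Fin.succ_ne_zero _))]
      have etail : (fun t : Fin (m + 1) => u t.succ)
          = Function.update (Function.update (fun t => g t.succ) j.castSucc x) j.succ y := by
        funext t
        by_cases h1 : t = j.succ
        · subst h1
          rw [Function.update_self, hu, Function.update_self]
        · rw [Function.update_of_ne h1]
          by_cases h2 : t = j.castSucc
          · subst h2
            rw [Function.update_self, hu, Fin.succ_castSucc,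
              Function.update_of_ne (Fin.castSucc_lt_succ (i := j.succ)).ne,
              Function.update_self]
          · rw [Function.update_of_ne h2, hu,
              Function.update_of_ne (fun h => h1 (Fin.succ_injective _ h)),
              Function.update_of_ne (by
                rw [← Fin.succ_castSucc]
                exact fun h => h2 (Fin.succ_injective _ h))]
      rw [List.ofFn_succ, List.prod_cons, e0, etail, hAB x y]
      simp [mul_assoc]


theorem S_comp_swap {n : ℕ} (M : Matrix (Fin (n + 1)) (Fin (n + 1)) R)
    (hcross : ∀ i j k l, M i j * M k l - M k l * M i j = M k j * M i l - M i l * M k j)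
    (f : Fin (n + 1) → Fin (n + 1)) (p : Fin n) :
    S M (f ∘ Equiv.swap p.castSucc p.succ) = - S M f := by
  have hab : p.castSucc ≠ p.succ := (Fin.castSucc_lt_succ (i := p)).ne
  set s := Equiv.swap p.castSucc p.succ with hs
  rw [eq_neg_iff_add_eq_zero, S, S, ← Finset.sum_add_distrib]
  apply Finset.sum_ninvolution (fun σ => σ * s)
  · intro σ
    obtain ⟨A, B, hAB⟩ := ofFn_update_prod p (fun t => M (σ t) (f t))
    have key : ∀ (u : Fin (n + 1) → R) (vx vy : R), u p.castSucc = vx → u p.succ = vy →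
        (∀ t, t ≠ p.castSucc → t ≠ p.succ → u t = M (σ t) (f t)) →
        (List.ofFn u).prod = A * vx * vy * B := by
      intro u vx vy hx hy hoth
      have hu : u = Function.update
          (Function.update (fun t => M (σ t) (f t)) p.castSucc vx) p.succ vy := by
        funext t
        by_cases h1 : t = p.succ
        · subst h1; rw [Function.update_self]; exact hy
        · rw [Function.update_of_ne h1]
          by_cases h2 : t = p.castSucc
          · subst h2; rw [Function.update_self]; exact hx
          · rw [Function.update_of_ne h2]; exact hoth t h2 h1
      rw [hu]; exact hAB vx vy
    have hsa : s p.castSucc = p.succ := Equiv.swap_apply_left _ _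
    have hsb : s p.succ = p.castSucc := Equiv.swap_apply_right _ _
    have hQ1 : (List.ofFn fun t => M (σ t) ((f ∘ ⇑s) t)).prod
        = A * (M (σ p.castSucc) (f p.succ)) * (M (σ p.succ) (f p.castSucc)) * B :=
      key _ _ _ (by simp [hsa]) (by simp [hsb])
        (fun t h1 h2 => by simp [hs, Equiv.swap_apply_of_ne_of_ne h1 h2])
    have hQ2 : (List.ofFn fun t => M (σ t) (f t)).prod
        = A * (M (σ p.castSucc) (f p.castSucc)) * (M (σ p.succ) (f p.succ)) * B :=
      key _ _ _ rfl rfl (fun _ _ _ => rfl)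
    have hQ3 : (List.ofFn fun t => M ((σ * s) t) ((f ∘ ⇑s) t)).prod
        = A * (M (σ p.succ) (f p.succ)) * (M (σ p.castSucc) (f p.castSucc)) * B :=
      key _ _ _ (by simp [Equiv.Perm.mul_apply, hsa]) (by simp [Equiv.Perm.mul_apply, hsb])
        (fun t h1 h2 => by simp [hs, Equiv.Perm.mul_apply, Equiv.swap_apply_of_ne_of_ne h1 h2])
    have hQ4 : (List.ofFn fun t => M ((σ * s) t) (f t)).prod
        = A * (M (σ p.succ) (f p.castSucc)) * (M (σ p.castSucc) (f p.succ)) * B :=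
      key _ _ _ (by simp [Equiv.Perm.mul_apply, hsa]) (by simp [Equiv.Perm.mul_apply, hsb])
        (fun t h1 h2 => by simp [hs, Equiv.Perm.mul_apply, Equiv.swap_apply_of_ne_of_ne h1 h2])
    have hsgn : ((Equiv.Perm.sign (σ * s) : ℤˣ) : ℤ) = -((Equiv.Perm.sign σ : ℤˣ) : ℤ) := by
      have : Equiv.Perm.sign (σ * s) = - Equiv.Perm.sign σ := by
        rw [Equiv.Perm.sign_mul, hs, Equiv.Perm.sign_swap hab, mul_neg_one]
      rw [this, Units.val_neg]
    rw [hQ1, hQ2, hQ3, hQ4, hsgn]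
    set z := ((Equiv.Perm.sign σ : ℤˣ) : ℤ) with hz
    set x := M (σ p.castSucc) (f p.castSucc)
    set y := M (σ p.succ) (f p.succ)
    set x' := M (σ p.succ) (f p.castSucc)
    set y' := M (σ p.castSucc) (f p.succ)
    have hc : x * y - y * x - (x' * y' - y' * x') = 0 :=
      sub_eq_zero_of_eq (hcross (σ p.castSucc) (f p.castSucc) (σ p.succ) (f p.succ))
    have expand : A * y' * x' * B + A * x * y * B - (A * y * x * B + A * x' * y' * B)
        = A * ((x * y - y * x) - (x' * y' - y' * x')) * B := by noncomm_ring
    have final : z • (A * y' * x' * B) + z • (A * x * y * B)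
        + ((-z) • (A * y * x * B) + (-z) • (A * x' * y' * B)) = 0 := by
      have h0 : z • (A * y' * x' * B) + z • (A * x * y * B)
          + ((-z) • (A * y * x * B) + (-z) • (A * x' * y' * B))
          = z • (A * y' * x' * B + A * x * y * B - (A * y * x * B + A * x' * y' * B)) := by
        rw [smul_sub, smul_add, smul_add, neg_smul, neg_smul]; abel
      rw [h0, expand, hc, mul_zero, zero_mul, smul_zero]
    exact final
  · intro σ _
    intro h
    have h1 : s p.castSucc = p.castSucc := by
      conv_lhs => rw [show s = σ⁻¹ * (σ * s) from by group, h]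
      simp
    rw [hs, Equiv.swap_apply_left] at h1
    exact hab h1.symm
  · exact fun σ => Finset.mem_univ _
  · intro σ
    rw [mul_assoc, hs, Equiv.swap_mul_self, mul_one]


theorem S_comp_perm {n : ℕ} (M : Matrix (Fin (n + 1)) (Fin (n + 1)) R)
    (hcross : ∀ i j k l, M i j * M k l - M k l * M i j = M k j * M i l - M i l * M k j)
    (g : Equiv.Perm (Fin (n + 1))) (f : Fin (n + 1) → Fin (n + 1)) :
    S M (f ∘ ⇑g) = (Equiv.Perm.sign g : ℤ) • S M f := by
  have hg : g ∈ Submonoid.closure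
      (Set.range fun i : Fin n => Equiv.swap i.castSucc i.succ) := by
    rw [Equiv.Perm.mclosure_swap_castSucc_succ]; trivial
  induction hg using Submonoid.closure_induction generalizing f with
  | mem x hx =>
    obtain ⟨i, rfl⟩ := hx
    rw [S_comp_swap M hcross f i, Equiv.Perm.sign_swap (Fin.castSucc_lt_succ (i := i)).ne]
    simp
  | one => simp [Equiv.Perm.coe_one, Function.comp_id]
  | mul x y hx hy ihx ihy =>
    have : f ∘ ⇑(x * y) = (f ∘ ⇑x) ∘ ⇑y := by rw [Equiv.Perm.coe_mul]; rfl
    rw [this, ihy, ihx, smul_smul, Equiv.Perm.sign_mul]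
    push_cast
    ring_nf

/-- The cycle `(j, j+1, …, n)` sending `last` to `j` and `castSucc t` to `j.succAbove t`. -/
def rot {n : ℕ} (j : Fin (n + 1)) : Equiv.Perm (Fin (n + 1)) :=
  Fin.revPerm * (Fin.cycleRange j.rev)⁻¹ * Fin.revPerm

theorem rot_last {n : ℕ} (j : Fin (n + 1)) : rot j (Fin.last n) = j := by
  show Fin.revPerm ((Fin.cycleRange j.rev)⁻¹ (Fin.revPerm (Fin.last n))) = j
  simp only [Fin.revPerm_apply]
  rw [Fin.rev_last]
  rw [show (Fin.cycleRange j.rev)⁻¹ (0 : Fin (n + 1)) = j.rev from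
    Fin.cycleRange_symm_zero j.rev]
  rw [Fin.rev_rev]

theorem rot_castSucc {n : ℕ} (j : Fin (n + 1)) (t : Fin n) :
    rot j t.castSucc = j.succAbove t := by
  show Fin.revPerm ((Fin.cycleRange j.rev)⁻¹ (Fin.revPerm t.castSucc)) = _
  simp only [Fin.revPerm_apply]
  rw [Fin.rev_castSucc]
  rw [show (Fin.cycleRange j.rev)⁻¹ t.rev.succ = j.rev.succAbove t.rev from
    Fin.cycleRange_symm_succ j.rev t.rev]
  rw [Fin.succAbove_rev_left, Fin.rev_rev, Fin.rev_rev]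

theorem sign_rot {n : ℕ} (j : Fin (n + 1)) :
    Equiv.Perm.sign (rot j) = (-1) ^ (j.rev : ℕ) := by
  rcases Int.units_eq_one_or (Equiv.Perm.sign (Fin.revPerm (n := n + 1))) with h | h <;>
    simp [rot, Equiv.Perm.sign_mul, Equiv.Perm.sign_inv, h, Fin.sign_cycleRange]

/-- Extension of a permutation of `Fin n` to `Fin (n+1)` fixing `last`. -/
def ext {n : ℕ} (π : Equiv.Perm (Fin n)) : Equiv.Perm (Fin (n + 1)) :=
  Fin.revPerm * (Equiv.Perm.decomposeFin.symm (0, Fin.revPerm * π * Fin.revPerm)) * Fin.revPerm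

theorem ext_last {n : ℕ} (π : Equiv.Perm (Fin n)) : ext π (Fin.last n) = Fin.last n := by
  show Fin.revPerm ((Equiv.Perm.decomposeFin.symm (0, Fin.revPerm * π * Fin.revPerm))
    (Fin.revPerm (Fin.last n))) = _
  simp only [Fin.revPerm_apply]
  rw [Fin.rev_last, Equiv.Perm.decomposeFin_symm_apply_zero, Fin.rev_zero]

theorem ext_castSucc {n : ℕ} (π : Equiv.Perm (Fin n)) (t : Fin n) :
    ext π t.castSucc = (π t).castSucc := by
  show Fin.revPerm ((Equiv.Perm.decomposeFin.symm (0, Fin.revPerm * π * Fin.revPerm))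
    (Fin.revPerm t.castSucc)) = _
  simp only [Fin.revPerm_apply]
  rw [Fin.rev_castSucc, Equiv.Perm.decomposeFin_symm_apply_succ, Equiv.swap_self]
  simp only [Equiv.Perm.mul_apply, Fin.revPerm_apply, Fin.rev_rev, Equiv.coe_refl, id_eq]
  rw [Fin.rev_succ, Fin.rev_rev]

theorem sign_ext {n : ℕ} (π : Equiv.Perm (Fin n)) :
    Equiv.Perm.sign (ext π) = Equiv.Perm.sign π := by
  rcases Int.units_eq_one_or (Equiv.Perm.sign (Fin.revPerm (n := n + 1))) with h | h <;>
  rcases Int.units_eq_one_or (Equiv.Perm.sign (Fin.revPerm (n := n))) with h' | h' <;>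
    simp [ext, Equiv.Perm.sign_mul, h, h', Equiv.Perm.decomposeFin.symm_sign]


/-- Decomposition map: `(j, π) ↦` the permutation sending `last ↦ j`,
`castSucc t ↦ j.succAbove (π t)`. -/
def E {n : ℕ} (jp : Fin (n + 1) × Equiv.Perm (Fin n)) : Equiv.Perm (Fin (n + 1)) :=
  rot jp.1 * ext jp.2

theorem E_last {n : ℕ} (jp : Fin (n + 1) × Equiv.Perm (Fin n)) :
    E jp (Fin.last n) = jp.1 := by
  rw [E, Equiv.Perm.mul_apply, ext_last, rot_last]

theorem E_castSucc {n : ℕ} (jp : Fin (n + 1) × Equiv.Perm (Fin n)) (t : Fin n) :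
    E jp t.castSucc = jp.1.succAbove (jp.2 t) := by
  rw [E, Equiv.Perm.mul_apply, ext_castSucc, rot_castSucc]

theorem sign_E {n : ℕ} (jp : Fin (n + 1) × Equiv.Perm (Fin n)) :
    Equiv.Perm.sign (E jp) = (-1) ^ (jp.1.rev : ℕ) * Equiv.Perm.sign jp.2 := by
  rw [E, Equiv.Perm.sign_mul, sign_rot, sign_ext]

theorem E_bij {n : ℕ} : Function.Bijective (E (n := n)) := by
  rw [Fintype.bijective_iff_injective_and_card]
  constructor
  · rintro ⟨j, π⟩ ⟨j', π'⟩ h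
    have hj : j = j' := by
      have := congrArg (fun σ : Equiv.Perm (Fin (n + 1)) => σ (Fin.last n)) h
      simpa [E_last] using this
    subst hj
    have hπ : π = π' := by
      ext t
      have := congrArg (fun σ : Equiv.Perm (Fin (n + 1)) => σ t.castSucc) h
      simp only [E_castSucc] at this
      exact congrArg Fin.val (Fin.succAbove_right_injective this)
    rw [hπ]
  · simp [Fintype.card_perm, Fintype.card_fin, Nat.factorial_succ]

theorem S_rot {n : ℕ} (N : Matrix (Fin (n + 1)) (Fin (n + 1)) R) (i : Fin (n + 1)) :
    S N ⇑(rot i) = ∑ j : Fin (n + 1), ∑ π : Equiv.Perm (Fin n),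
      (((-1) ^ (j.rev : ℕ) * Equiv.Perm.sign π : ℤˣ) : ℤ) •
        ((List.ofFn fun t => N (j.succAbove (π t)) (i.succAbove t)).prod * N j i) := by
  have hsplit : ∑ jp : Fin (n + 1) × Equiv.Perm (Fin n),
      (((-1) ^ (jp.1.rev : ℕ) * Equiv.Perm.sign jp.2 : ℤˣ) : ℤ) •
        ((List.ofFn fun t => N (jp.1.succAbove (jp.2 t)) (i.succAbove t)).prod * N jp.1 i)
      = ∑ j : Fin (n + 1), ∑ π : Equiv.Perm (Fin n),
      (((-1) ^ (j.rev : ℕ) * Equiv.Perm.sign π : ℤˣ) : ℤ) •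
        ((List.ofFn fun t => N (j.succAbove (π t)) (i.succAbove t)).prod * N j i) :=
    Fintype.sum_prod_type _
  rw [← hsplit]
  refine (Fintype.sum_bijective E E_bij _ _ ?_).symm
  rintro ⟨j, π⟩
  rw [sign_E]
  congr 1
  rw [List.ofFn_succ' (fun t => N ((E (j, π)) t) (rot i t)), List.prod_concat]
  congr 1
  · refine congrArg List.prod (congrArg List.ofFn (funext fun t => ?_))
    rw [E_castSucc, rot_castSucc]
  · rw [E_last, rot_last]


theorem S_eq_zero_of_eq_cols {m : ℕ} (A : Matrix (Fin (m + 2)) (Fin (m + 2)) R)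
    (hcol : ∀ a b c, Commute (A a c) (A b c))
    (p q : Fin (m + 2)) (hcols : ∀ x, A x p = A x q)
    (τ : Equiv.Perm (Fin (m + 2)))
    (hτa : τ ((0 : Fin (m + 1)).castSucc) = p) (hτb : τ ((0 : Fin (m + 1)).succ) = q) :
    S A ⇑τ = 0 := by
  set a : Fin (m + 2) := (0 : Fin (m + 1)).castSucc with ha
  set b : Fin (m + 2) := (0 : Fin (m + 1)).succ with hb
  have hab : a ≠ b := Fin.castSucc_lt_succ.ne
  set s := Equiv.swap a b with hs
  rw [S]
  apply Finset.sum_ninvolution (fun σ => σ * s)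
  · intro σ
    obtain ⟨A₁, B₁, hAB⟩ := ofFn_update_prod (0 : Fin (m + 1)) (fun t => A (σ t) (τ t))
    have key : ∀ (u : Fin (m + 2) → R) (vx vy : R), u a = vx → u b = vy →
        (∀ t, t ≠ a → t ≠ b → u t = A (σ t) (τ t)) →
        (List.ofFn u).prod = A₁ * vx * vy * B₁ := by
      intro u vx vy hx hy hoth
      have hu : u = Function.update
          (Function.update (fun t => A (σ t) (τ t)) a vx) b vy := by
        funext t
        by_cases h1 : t = b
        · subst h1; rw [Function.update_self]; exact hy
        · rw [Function.update_of_ne h1]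
          by_cases h2 : t = a
          · subst h2; rw [Function.update_self]; exact hx
          · rw [Function.update_of_ne h2]; exact hoth t h2 h1
      rw [hu]; exact hAB vx vy
    have hQ1 : (List.ofFn fun t => A (σ t) (τ t)).prod
        = A₁ * (A (σ a) p) * (A (σ b) p) * B₁ :=
      key _ _ _ (by rw [hτa]) (by rw [hτb, ← hcols]) (fun _ _ _ => rfl)
    have hQ2 : (List.ofFn fun t => A ((σ * s) t) (τ t)).prod
        = A₁ * (A (σ b) p) * (A (σ a) p) * B₁ :=
      key _ _ _
        (by rw [Equiv.Perm.mul_apply, hs, Equiv.swap_apply_left, hτa])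
        (by rw [Equiv.Perm.mul_apply, hs, Equiv.swap_apply_right, hτb, ← hcols])
        (fun t h1 h2 => by
          rw [Equiv.Perm.mul_apply, hs, Equiv.swap_apply_of_ne_of_ne h1 h2])
    have hsgn : ((Equiv.Perm.sign (σ * s) : ℤˣ) : ℤ) = -((Equiv.Perm.sign σ : ℤˣ) : ℤ) := by
      have : Equiv.Perm.sign (σ * s) = - Equiv.Perm.sign σ := by
        rw [Equiv.Perm.sign_mul, hs, Equiv.Perm.sign_swap hab, mul_neg_one]
      rw [this, Units.val_neg]
    rw [hQ1, hQ2, hsgn, neg_smul]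
    have hxy : A₁ * A (σ a) p * A (σ b) p * B₁ = A₁ * A (σ b) p * A (σ a) p * B₁ := by
      rw [mul_assoc A₁, (hcol (σ a) (σ b) p).eq, ← mul_assoc]
    rw [hxy]
    exact add_neg_cancel _
  · intro σ _ h
    have h1 : s a = a := by
      conv_lhs => rw [show s = σ⁻¹ * (σ * s) from by group, h]
      simp
    rw [hs, Equiv.swap_apply_left] at h1
    exact hab h1.symm
  · exact fun σ => Finset.mem_univ _
  · intro σ
    rw [mul_assoc, hs, Equiv.swap_mul_self, mul_one]

theorem detCol_eq_zero_of_eq_cols {n : ℕ} (A : Matrix (Fin (n + 1)) (Fin (n + 1)) R)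
    (hcol : ∀ a b c, Commute (A a c) (A b c))
    (hcross : ∀ i j k l, A i j * A k l - A k l * A i j = A k j * A i l - A i l * A k j)
    (p q : Fin (n + 1)) (hpq : p ≠ q) (hcols : ∀ x, A x p = A x q) :
    detCol A = 0 := by
  cases n with
  | zero =>
    have h1 := p.isLt
    have h2 := q.isLt
    exact absurd (Fin.ext (by omega)) hpq
  | succ m =>
    set a : Fin (m + 2) := (0 : Fin (m + 1)).castSucc with ha
    set b : Fin (m + 2) := (0 : Fin (m + 1)).succ with hb
    have hab : a ≠ b := Fin.castSucc_lt_succ.ne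
    set w := Equiv.swap a p with hw
    have hwq : w q ≠ a := by
      intro h
      have : q = w a := by
        rw [← h]; rw [Equiv.swap_apply_self]
      rw [hw, Equiv.swap_apply_left] at this
      exact hpq this.symm
    set τ := w * Equiv.swap b (w q) with hτ
    have hτa : τ a = p := by
      rw [hτ, Equiv.Perm.mul_apply,
        Equiv.swap_apply_of_ne_of_ne hab (Ne.symm hwq), hw, Equiv.swap_apply_left]
    have hτb : τ b = q := by
      rw [hτ, Equiv.Perm.mul_apply, Equiv.swap_apply_left, hw, Equiv.swap_apply_self]
    have h0 : S A ⇑τ = 0 := S_eq_zero_of_eq_cols A hcol p q hcols τ hτa hτb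
    have h1 : S A (id ∘ ⇑τ) = ((Equiv.Perm.sign τ : ℤˣ) : ℤ) • S A id := S_comp_perm A hcross τ id
    rw [Function.id_comp, h0] at h1
    rw [detCol_eq_S]
    rcases Int.units_eq_one_or (Equiv.Perm.sign τ) with h | h <;> rw [h] at h1 <;>
      simpa using h1.symm

theorem cramer_entry {n : ℕ} (M : Matrix (Fin (n + 1)) (Fin (n + 1)) R)
    (hcross : ∀ i j k l, M i j * M k l - M k l * M i j = M k j * M i l - M i l * M k j)
    (i k : Fin (n + 1)) :
    ∑ j : Fin (n + 1), adjCol M i j * M j k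
      = detCol (fun x c => if c = i then M x k else M x c : Matrix (Fin (n + 1)) (Fin (n + 1)) R)
      := by
  set N : Matrix (Fin (n + 1)) (Fin (n + 1)) R :=
    fun x c => if c = i then M x k else M x c with hN
  have hNapp : ∀ x c, N x c = if c = i then M x k else M x c := fun _ _ => rfl
  have hcrossN : ∀ a b c d, N a b * N c d - N c d * N a b = N c b * N a d - N a d * N c b := by
    intro a b c d
    rw [hNapp, hNapp, hNapp, hNapp]
    split_ifs <;> exact hcross _ _ _ _
  have h2 : ∀ e : ℕ, ((-1 : ℤ) ^ e) * (-1) ^ e = 1 := fun e => by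
    rw [← pow_add]; exact Even.neg_one_pow ⟨e, rfl⟩
  have hparity : ∀ a : Fin (n + 1), ((-1 : ℤ)) ^ (a.rev : ℕ) = (-1) ^ n * (-1) ^ (a : ℕ) := by
    intro a
    have hv := Fin.val_rev a
    have hlt := a.isLt
    have hsum : (a.rev : ℕ) + (a : ℕ) = n := by omega
    calc ((-1 : ℤ)) ^ (a.rev : ℕ)
        = (-1) ^ (a.rev : ℕ) * ((-1) ^ (a : ℕ) * (-1) ^ (a : ℕ)) := by rw [h2, mul_one]
      _ = ((-1) ^ ((a.rev : ℕ) + (a : ℕ))) * (-1) ^ (a : ℕ) := by rw [← mul_assoc, ← pow_add]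
      _ = (-1) ^ n * (-1) ^ (a : ℕ) := by rw [hsum]
  have hS : S N (id ∘ ⇑(rot i)) = ((Equiv.Perm.sign (rot i) : ℤˣ) : ℤ) • S N id :=
    S_comp_perm N hcrossN (rot i) id
  rw [Function.id_comp] at hS
  have hrot : ((Equiv.Perm.sign (rot i) : ℤˣ) : ℤ) = (-1) ^ (i.rev : ℕ) := by
    rw [sign_rot]; simp
  have hD : detCol N = ((-1 : ℤ) ^ (i.rev : ℕ)) • S N ⇑(rot i) := by
    rw [detCol_eq_S N, hS, hrot, smul_smul, h2, one_smul]
  rw [hD, S_rot, Finset.smul_sum]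
  refine Finset.sum_congr rfl fun j _ => ?_
  rw [Finset.smul_sum]
  have hadj : adjCol M i j
      = ((-1 : ℤ) ^ ((i : ℕ) + (j : ℕ))) • detCol (M.submatrix j.succAbove i.succAbove) := rfl
  rw [hadj, smul_mul_assoc, detCol, Finset.sum_mul, Finset.smul_sum]
  refine Finset.sum_congr rfl fun π _ => ?_
  have hprod : (List.ofFn fun t => N (j.succAbove (π t)) (i.succAbove t))
      = List.ofFn fun t => (M.submatrix j.succAbove i.succAbove) (π t) t := by
    refine congrArg List.ofFn (funext fun t => ?_)
    rw [hNapp, if_neg (Fin.succAbove_ne i t)]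
    rfl
  have hNji : N j i = M j k := by rw [hNapp, if_pos rfl]
  rw [hprod, hNji, smul_mul_assoc, smul_smul, smul_smul]
  congr 1
  have hcast : (((-1) ^ (j.rev : ℕ) * Equiv.Perm.sign π : ℤˣ) : ℤ)
      = (-1 : ℤ) ^ (j.rev : ℕ) * ((Equiv.Perm.sign π : ℤˣ) : ℤ) := by
    push_cast
    ring
  rw [hcast, hparity i, hparity j]
  have h1 := h2 n
  calc ((-1 : ℤ)) ^ ((i : ℕ) + (j : ℕ)) * ((Equiv.Perm.sign π : ℤˣ) : ℤ)
      = ((-1 : ℤ) ^ n * (-1) ^ n)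
          * ((-1 : ℤ) ^ ((i : ℕ) + (j : ℕ)) * ((Equiv.Perm.sign π : ℤˣ) : ℤ)) := by
        rw [h1, one_mul]
    _ = (-1 : ℤ) ^ n * (-1) ^ (i : ℕ)
          * ((-1 : ℤ) ^ n * (-1) ^ (j : ℕ) * ((Equiv.Perm.sign π : ℤˣ) : ℤ)) := by
        rw [pow_add]; ring

end ManinCramer

/-- The left Cramer identity for Manin matrices: if `M` is a Manin matrix then
`M^adj · M = det^col M · Id`. -/


theorem manin_adjCol_mul
    {R : Type*} [Ring R] {n : ℕ} (M : Matrix (Fin (n + 1)) (Fin (n + 1)) R)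
    (hcol : ∀ i k j, Commute (M i j) (M k j))
    (hcross : ∀ i j k l, M i j * M k l - M k l * M i j = M k j * M i l - M i l * M k j) :
    adjCol M * M = detCol M • (1 : Matrix (Fin (n + 1)) (Fin (n + 1)) R) := by
  ext i k
  rw [Matrix.mul_apply, Matrix.smul_apply, ManinCramer.cramer_entry M hcross i k]
  by_cases h : i = k
  · subst h
    have hNM : (fun x c => if c = i then M x i else M x c
        : Matrix (Fin (n + 1)) (Fin (n + 1)) R) = M := by
      funext x c
      split_ifs with hc
      · subst hc; rfl
      · rfl
    rw [hNM, Matrix.one_apply_eq, smul_eq_mul, mul_one]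
  · set N : Matrix (Fin (n + 1)) (Fin (n + 1)) R :=
      fun x c => if c = i then M x k else M x c with hN
    have hNapp : ∀ x c, N x c = if c = i then M x k else M x c := fun _ _ => rfl
    have hcolN : ∀ a b c, Commute (N a c) (N b c) := by
      intro a b c
      rw [hNapp, hNapp]
      split_ifs <;> exact hcol _ _ _
    have hcrossN : ∀ a b c d, N a b * N c d - N c d * N a b = N c b * N a d - N a d * N c b := by
      intro a b c d
      rw [hNapp, hNapp, hNapp, hNapp]
      split_ifs <;> exact hcross _ _ _ _
    have hz : detCol N = 0 := by
      refine ManinCramer.detCol_eq_zero_of_eq_cols N hcolN hcrossN i k h fun x => ?_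
      rw [hNapp, hNapp, if_pos rfl, if_neg (fun hc => h (hc.symm))]
    rw [hz, Matrix.one_apply_ne h, smul_zero]
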